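/- arXiv:2503.13516 — 2 statements merged into one kernel-verified Lean document; each statement's English description precedes it below -/
import Mathlib

section
/- Let a, b, γ_c, s_e, d_e, α_n, k_n, g, γ_e, s_n, d_n be positive real parameters with a > γ_c·s_e/d_e. Define f₁(T) = (1/(d_e + γ_e·T))·(s_e + α_n·k_n·s_n·T/(d_n·(T+g) + k_n·T)) and f₂(T) = a·(1 − b·T)/γ_c. Then the function f(T) = f₁(T) − f₂(T) satisfies f(0) < 0 and f(1/b) > 0, and hence there exists T* ∈ (0, 1/b) with f(T*) = 0. -/
theorem stmt_0 (a b γc se de αn kn g γe sn dn : ℝ)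
    (ha : 0 < a) (hb : 0 < b) (hγc : 0 < γc) (hse : 0 < se) (hde : 0 < de)
    (hαn : 0 < αn) (hkn : 0 < kn) (hg : 0 < g) (hγe : 0 < γe) (hsn : 0 < sn) (hdn : 0 < dn)
    (hgrow : a > γc * se / de)
    (f₁ : ℝ → ℝ)
    (hf₁ : ∀ T, f₁ T = (1 / (de + γe * T)) * (se + αn * kn * sn * T / (dn * (T + g) + kn * T)))
    (f₂ : ℝ → ℝ) (hf₂ : ∀ T, f₂ T = a * (1 - b * T) / γc)
    (f : ℝ → ℝ) (hf : ∀ T, f T = f₁ T - f₂ T) :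
    f 0 < 0 ∧ f (1 / b) > 0 ∧ ∃ T' ∈ Set.Ioo 0 (1 / b), f T' = 0 := by
  have hb' : (0:ℝ) < 1 / b := by positivity
  have h0 : f 0 < 0 := by
    rw [hf, hf₁, hf₂]
    have h : γc * se / de < a := hgrow
    rw [div_lt_iff₀ hde] at h
    simp only [mul_zero, add_zero, zero_div, mul_one, sub_zero, div_zero]
    rw [sub_neg, one_div, inv_mul_eq_div, div_lt_div_iff₀ hde hγc]
    nlinarith
  have h1 : f (1 / b) > 0 := by
    rw [hf, hf₁, hf₂]
    rw [mul_one_div_cancel (ne_of_gt hb)]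
    simp only [sub_self, mul_zero, zero_div, sub_zero]
    positivity
  refine ⟨h0, h1, ?_⟩
  have hfe : f = fun T => (1 / (de + γe * T)) *
      (se + αn * kn * sn * T / (dn * (T + g) + kn * T)) - a * (1 - b * T) / γc := by
    funext T; rw [hf, hf₁, hf₂]
  have hcont : ContinuousOn f (Set.Icc 0 (1 / b)) := by
    rw [hfe]
    apply ContinuousOn.sub
    · apply ContinuousOn.mul
      · apply ContinuousOn.div continuousOn_const (by fun_prop)
        intro x hx
        have : 0 ≤ x := hx.1
        positivity
      · apply ContinuousOn.add continuousOn_const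
        apply ContinuousOn.div (by fun_prop) (by fun_prop)
        intro x hx
        have : 0 ≤ x := hx.1
        positivity
    · fun_prop
  have := intermediate_value_Ioo (le_of_lt hb') hcont
  have h0mem : (0:ℝ) ∈ Set.Ioo (f 0) (f (1/b)) := ⟨h0, h1⟩
  obtain ⟨T', hT', hfT'⟩ := this h0mem
  exact ⟨T', hT', hfT'⟩
end

section
/- Let a, b, γ_c, s_e, d_e, α_n, k_n, g, γ_e, s_n, d_n be positive reals with a > γ_c·s_e/d_e. Suppose for every T ∈ [0, 1/b] we have ((T + β₁)² − (β₁² + β₃ − β₁·β₂))/(T² + β₂·T + β₃)² ≤ β₄·a·b/γ_c (with β₁,…,β₄ as defined from the parameters). Then the equation f₁(T) = a(1 − bT)/γ_c has exactly one solution T* in the interval (0, 1/b), where f₁(T) = (1/β₄)·(T + β₁)/(T² + β₂·T + β₃). -/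
theorem stmt_3 (a b γc se de αn kn g γe sn dn : ℝ)
    (ha : 0 < a) (hb : 0 < b) (hγc : 0 < γc) (hse : 0 < se) (hde : 0 < de)
    (hαn : 0 < αn) (hkn : 0 < kn) (hg : 0 < g) (hγe : 0 < γe) (hsn : 0 < sn) (hdn : 0 < dn)
    (hgrow : a > γc * se / de)
    (β₁ β₂ β₃ β₄ : ℝ)
    (hβ₁ : β₁ = dn * g * se / (se * (dn + kn) + αn * kn * sn))
    (hβ₂ : β₂ = (de * (dn + kn) + γe * dn * g) / (γe * (dn + kn)))
    (hβ₃ : β₃ = de * dn * g / (γe * (dn + kn)))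
    (hβ₄ : β₄ = γe * (dn + kn) / (se * (dn + kn) + αn * kn * sn))
    (hΔ : ∀ T ∈ Set.Icc (0 : ℝ) (1 / b),
      ((T + β₁) ^ 2 - (β₁ ^ 2 + β₃ - β₁ * β₂)) / (T ^ 2 + β₂ * T + β₃) ^ 2
        ≤ β₄ * (a * b / γc))
    (f₁ : ℝ → ℝ)
    (hf₁ : ∀ T, f₁ T = (1 / β₄) * (T + β₁) / (T ^ 2 + β₂ * T + β₃)) :
    ∃! T', T' ∈ Set.Ioo (0 : ℝ) (1 / b) ∧ f₁ T' = a * (1 - b * T') / γc := by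
  have hβ₁p : 0 < β₁ := by rw [hβ₁]; positivity
  have hβ₂p : 0 < β₂ := by rw [hβ₂]; positivity
  have hβ₃p : 0 < β₃ := by rw [hβ₃]; positivity
  have hβ₄p : 0 < β₄ := by rw [hβ₄]; positivity
  have h1b : 0 < 1 / b := by positivity
  set f : ℝ → ℝ := fun T => f₁ T - a * (1 - b * T) / γc with hf
  have hD : ∀ T : ℝ, 0 ≤ T → 0 < T ^ 2 + β₂ * T + β₃ := by
    intro T hT; nlinarith
  -- derivative
  have hHas : ∀ T : ℝ, 0 ≤ T → HasDerivAt f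
      (((1 / β₄) * (T ^ 2 + β₂ * T + β₃) - (1 / β₄) * (T + β₁) * (2 * T + β₂)) /
        (T ^ 2 + β₂ * T + β₃) ^ 2 + a * b / γc) T := by
    intro T hT
    have hDne : T ^ 2 + β₂ * T + β₃ ≠ 0 := (hD T hT).ne'
    have h1 : HasDerivAt (fun T : ℝ => (1 / β₄) * (T + β₁)) (1 / β₄) T := by
      simpa using ((hasDerivAt_id T).add_const β₁).const_mul (1 / β₄)
    have h2 : HasDerivAt (fun T : ℝ => T ^ 2 + β₂ * T + β₃) (2 * T + β₂) T := by
      have := ((hasDerivAt_pow 2 T).add ((hasDerivAt_id T).const_mul β₂)).add_const β₃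
      simpa [mul_comm, neg_div] using this
    have h3 := h1.fun_div h2 hDne
    have h4 : HasDerivAt (fun T : ℝ => a * (1 - b * T) / γc) (-(a * b / γc)) T := by
      have := (((hasDerivAt_id T).const_mul b).const_sub 1).const_mul a |>.div_const γc
      simpa [mul_comm, neg_div] using this
    have h5 := h3.fun_sub h4
    have hfe : f = fun T => (1 / β₄) * (T + β₁) / (T ^ 2 + β₂ * T + β₃) - a * (1 - b * T) / γc := by
      funext t; simp [hf, hf₁ t]
    rw [hfe]
    convert h5 using 1
    · rfl
    · rfl
    ring
  have hderiv_nonneg : ∀ T ∈ Set.Icc (0:ℝ) (1/b),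
      0 ≤ ((1 / β₄) * (T ^ 2 + β₂ * T + β₃) - (1 / β₄) * (T + β₁) * (2 * T + β₂)) /
        (T ^ 2 + β₂ * T + β₃) ^ 2 + a * b / γc := by
    intro T hT
    have hΔT := hΔ T hT
    have hDp := hD T hT.1
    have key : (1 / β₄) * (((T + β₁) ^ 2 - (β₁ ^ 2 + β₃ - β₁ * β₂)) / (T ^ 2 + β₂ * T + β₃) ^ 2)
        ≤ (1 / β₄) * (β₄ * (a * b / γc)) :=
      mul_le_mul_of_nonneg_left hΔT (by positivity)
    have hr : (1 / β₄) * (β₄ * (a * b / γc)) = a * b / γc := by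
      field_simp
    have hl : ((1 / β₄) * (T ^ 2 + β₂ * T + β₃) - (1 / β₄) * (T + β₁) * (2 * T + β₂)) /
        (T ^ 2 + β₂ * T + β₃) ^ 2
        = -((1 / β₄) * (((T + β₁) ^ 2 - (β₁ ^ 2 + β₃ - β₁ * β₂)) / (T ^ 2 + β₂ * T + β₃) ^ 2)) := by
      field_simp
      ring
    rw [hl]
    linarith [key.trans_eq hr]
  have hcont : ContinuousOn f (Set.Icc 0 (1/b)) := fun x hx =>
    (hHas x hx.1).continuousAt.continuousWithinAt
  have hmono : MonotoneOn f (Set.Icc 0 (1/b)) := by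
    apply monotoneOn_of_deriv_nonneg (convex_Icc _ _) hcont
    · intro x hx
      rw [interior_Icc] at hx
      exact ((hHas x hx.1.le).differentiableAt).differentiableWithinAt
    · intro x hx
      rw [interior_Icc] at hx
      rw [(hHas x hx.1.le).deriv]
      exact hderiv_nonneg x ⟨hx.1.le, hx.2.le⟩
  have hf0 : f 0 < 0 := by
    have h0 : f 0 = se / de - a / γc := by
      simp only [hf, hf₁]
      rw [hβ₁, hβ₃, hβ₄]
      have hden : se * (dn + kn) + αn * kn * sn > 0 := by positivity
      field_simp
      ring
    rw [h0]
    rw [gt_iff_lt, div_lt_iff₀ hde] at hgrow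
    rw [sub_neg, div_lt_div_iff₀ hde hγc]
    nlinarith
  have hf1b : 0 < f (1/b) := by
    have : a * (1 - b * (1/b)) / γc = 0 := by
      field_simp
      ring
    simp only [hf, hf₁, this, sub_zero]
    have := hD (1/b) h1b.le
    positivity
  obtain ⟨T', hT'mem, hT'root⟩ : ∃ T' ∈ Set.Ioo (0:ℝ) (1/b), f T' = 0 := by
    have := intermediate_value_Ioo h1b.le hcont
    have h0mem : (0:ℝ) ∈ Set.Ioo (f 0) (f (1/b)) := ⟨hf0, hf1b⟩
    obtain ⟨x, hx, hfx⟩ := this h0mem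
    exact ⟨x, hx, hfx⟩
  -- roots of f are the solutions
  have hroot_iff : ∀ T, f T = 0 ↔ f₁ T = a * (1 - b * T) / γc := by
    intro T; simp [hf, sub_eq_zero]
  -- uniqueness of roots
  have huniq : ∀ x ∈ Set.Ioo (0:ℝ) (1/b), ∀ z ∈ Set.Ioo (0:ℝ) (1/b),
      f x = 0 → f z = 0 → x = z := by
    have key : ∀ x ∈ Set.Ioo (0:ℝ) (1/b), ∀ z ∈ Set.Ioo (0:ℝ) (1/b),
        f x = 0 → f z = 0 → x < z → False := by
      intro x hx z hz hfx hfz hxz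
      have hxI : x ∈ Set.Icc (0:ℝ) (1/b) := ⟨hx.1.le, hx.2.le⟩
      have hzI : z ∈ Set.Icc (0:ℝ) (1/b) := ⟨hz.1.le, hz.2.le⟩
      have hzero : ∀ t ∈ Set.Icc x z, f t = 0 := by
        intro t ht
        have htI : t ∈ Set.Icc (0:ℝ) (1/b) :=
          ⟨hx.1.le.trans ht.1, ht.2.trans hz.2.le⟩
        have h1 := hmono hxI htI ht.1
        have h2 := hmono htI hzI ht.2
        rw [hfx] at h1; rw [hfz] at h2; linarith
      -- polynomial vanishing on an interval
      set P : Polynomial ℝ :=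
        Polynomial.C (β₄*a*b) * Polynomial.X^3 + Polynomial.C (β₄*a*(b*β₂ - 1)) * Polynomial.X^2
        + Polynomial.C (γc - β₄*a*(β₂ - b*β₃)) * Polynomial.X + Polynomial.C (γc*β₁ - β₄*a*β₃)
        with hP
      have hPeval : ∀ t ∈ Set.Icc x z, P.IsRoot t := by
        intro t ht
        have hft := hzero t ht
        have htI : t ∈ Set.Icc (0:ℝ) (1/b) :=
          ⟨hx.1.le.trans ht.1, ht.2.trans hz.2.le⟩
        have hDne : t ^ 2 + β₂ * t + β₃ ≠ 0 := (hD t htI.1).ne'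
        simp only [hf, hf₁, sub_eq_zero] at hft
        have hkey : γc * (t + β₁) - β₄ * a * (1 - b * t) * (t ^ 2 + β₂ * t + β₃) = 0 := by
          field_simp [hβ₄p.ne', hγc.ne'] at hft
          rw [div_eq_iff (by intro h; apply hDne; linear_combination h)] at hft
          linear_combination hft
        simp only [Polynomial.IsRoot, hP, Polynomial.eval_add, Polynomial.eval_mul,
          Polynomial.eval_pow, Polynomial.eval_C, Polynomial.eval_X]
        linear_combination hkey
      have hinf : {r : ℝ | P.IsRoot r}.Infinite :=
        Set.Infinite.mono hPeval (Set.Icc_infinite hxz)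
      have hP0 : P = 0 := Polynomial.eq_zero_of_infinite_isRoot P hinf
      have hc3 : P.coeff 3 = β₄ * a * b := by
        rw [hP]
        simp only [Polynomial.coeff_add, Polynomial.coeff_C_mul, Polynomial.coeff_X_pow,
          Polynomial.coeff_C]
        norm_num [Polynomial.coeff_X]
      rw [hP0] at hc3
      simp only [Polynomial.coeff_zero] at hc3
      have : 0 < β₄ * a * b := by positivity
      linarith
    intro x hx z hz hfx hfz
    rcases lt_trichotomy x z with h | h | h
    · exact absurd (key x hx z hz hfx hfz h) id
    · exact h
    · exact absurd (key z hz x hx hfz hfx h) id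
  refine ⟨T', ⟨hT'mem, (hroot_iff T').mp hT'root⟩, ?_⟩
  intro y ⟨hy, hyr⟩
  exact huniq y hy T' hT'mem ((hroot_iff y).mpr hyr) hT'root
end
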